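/- Let Δ_D ⊆ ℝ² be a polytope and Δ_v = conv(0, w) a lattice segment. The function q ↦ d(q) := wid_u((Δ_D : q·Δ_v)), defined for q ∈ ℝ_{≥0} (with d(q) = −∞ when the quotient is empty), is concave and piecewise linear on the interval where it is finite, and there exists q̂ ≥ 0 such that d(q) = −∞ for all q > q̂. -/

import Mathlib

noncomputable section
open Pointwise

def toR (p : ℤ × ℤ) : ℝ × ℝ := ((p.1 : ℝ), (p.2 : ℝ))

def pairR (x : ℝ × ℝ) (u : ℤ × ℤ) : ℝ := x.1 * u.1 + x.2 * u.2

/-- Polytope quotient `(P : Q) = {x | x + Q ⊆ P}`. -/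
def quotP (P Q : Set (ℝ × ℝ)) : Set (ℝ × ℝ) := {x | ∀ q ∈ Q, x + q ∈ P}

/-- Width of a set with respect to a lattice functional `u`. -/
def wid (u : ℤ × ℤ) (P : Set (ℝ × ℝ)) : ℝ :=
  sSup ((fun pq : (ℝ × ℝ) × (ℝ × ℝ) => |pairR (pq.1 - pq.2) u|) '' (P ×ˢ P))

open Finset


variable {E : Type*} [AddCommGroup E] [Module ℝ E]

def crossPt (ℓ : E →ₗ[ℝ] ℝ) (n p : E) : E :=
  (ℓ p / (ℓ p - ℓ n)) • n + (-ℓ n / (ℓ p - ℓ n)) • p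

open scoped Classical in
def sliceF (ℓ : E →ₗ[ℝ] ℝ) (S : Finset E) : Finset E :=
  (S.filter fun x => ℓ x = 0) ∪
    (((S ×ˢ S).filter fun np => ℓ np.1 < 0 ∧ 0 < ℓ np.2).image fun np => crossPt ℓ np.1 np.2)

lemma sliceF_subset_convexHull (ℓ : E →ₗ[ℝ] ℝ) (S : Finset E) :
    (sliceF ℓ S : Set E) ⊆ convexHull ℝ (S : Set E) := by
  classical
  intro x hx
  simp only [sliceF, coe_union, Set.mem_union, mem_coe, mem_filter, coe_image, Set.mem_image,
    mem_coe, mem_filter, mem_product] at hx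
  rcases hx with ⟨hxS, _⟩ | ⟨⟨n, p⟩, ⟨⟨hnS, hpS⟩, hn, hp⟩, rfl⟩
  · exact subset_convexHull ℝ _ hxS
  · have hd : (0:ℝ) < ℓ p - ℓ n := by linarith
    exact (convex_convexHull ℝ _) (subset_convexHull ℝ _ hnS) (subset_convexHull ℝ _ hpS)
      (div_nonneg hp.le hd.le) (div_nonneg (by linarith) hd.le)
      (by field_simp; ring)

lemma sliceF_vanish (ℓ : E →ₗ[ℝ] ℝ) (S : Finset E) {x : E} (hx : x ∈ sliceF ℓ S) : ℓ x = 0 := by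
  classical
  simp only [sliceF, mem_union, mem_filter, mem_image, mem_product] at hx
  rcases hx with ⟨_, h⟩ | ⟨⟨n, p⟩, _, rfl⟩
  · exact h
  · simp only [crossPt, map_add, map_smul, smul_eq_mul]
    ring

lemma sliceF_main (ℓ : E →ₗ[ℝ] ℝ) (S : Finset E) {x : E}
    (hx : x ∈ convexHull ℝ (S : Set E)) (hx0 : ℓ x = 0) :
    x ∈ convexHull ℝ (sliceF ℓ S : Set E) := by
  classical
  obtain ⟨a, ha0, ha1, hax⟩ := Finset.mem_convexHull'.1 hx
  set N := S.filter (fun y => ℓ y < 0) with hN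
  set P := S.filter (fun y => 0 < ℓ y) with hP
  set Z := S.filter (fun y => ℓ y = 0) with hZ
  have hfilt1 : (S.filter fun y => ¬ ℓ y = 0).filter (fun y => ℓ y < 0) = N := by
    rw [Finset.filter_filter]
    apply Finset.filter_congr
    intro y _
    constructor
    · rintro ⟨_, h⟩; exact h
    · intro h; exact ⟨ne_of_lt h, h⟩
  have hfilt2 : (S.filter fun y => ¬ ℓ y = 0).filter (fun y => ¬ ℓ y < 0) = P := by
    rw [Finset.filter_filter]
    apply Finset.filter_congr
    intro y _
    constructor
    · rintro ⟨h1, h2⟩; exact lt_of_le_of_ne (not_lt.1 h2) (Ne.symm h1)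
    · intro h; exact ⟨(ne_of_gt h), not_lt.2 h.le⟩
  have hsplit : ∀ f : E → ℝ, ∑ y ∈ S, f y = ∑ y ∈ Z, f y + (∑ y ∈ N, f y + ∑ y ∈ P, f y) := by
    intro f
    rw [← Finset.sum_filter_add_sum_filter_not S (fun y => ℓ y = 0) f]
    congr 1
    rw [← Finset.sum_filter_add_sum_filter_not (S.filter fun y => ¬ ℓ y = 0) (fun y => ℓ y < 0) f,
      hfilt1, hfilt2]
  have hsplitv : ∀ f : E → E, ∑ y ∈ S, f y = ∑ y ∈ Z, f y + (∑ y ∈ N, f y + ∑ y ∈ P, f y) := by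
    intro f
    rw [← Finset.sum_filter_add_sum_filter_not S (fun y => ℓ y = 0) f]
    congr 1
    rw [← Finset.sum_filter_add_sum_filter_not (S.filter fun y => ¬ ℓ y = 0) (fun y => ℓ y < 0) f,
      hfilt1, hfilt2]
  have hbal : ∑ y ∈ S, a y * ℓ y = 0 := by
    have h := congrArg ℓ hax
    rw [map_sum] at h
    simp only [map_smul, smul_eq_mul] at h
    rw [h, hx0]
  have hZ0 : ∑ y ∈ Z, a y * ℓ y = 0 := by
    apply Finset.sum_eq_zero
    intro y hy
    rw [(Finset.mem_filter.1 hy).2, mul_zero]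
  set σ : ℝ := ∑ y ∈ P, a y * ℓ y with hσ
  have hbal2 : ∑ y ∈ N, a y * ℓ y = -σ := by
    have := hsplit (fun y => a y * ℓ y)
    rw [hbal, hZ0] at this
    linarith
  have hσ0 : 0 ≤ σ := by
    apply Finset.sum_nonneg
    intro y hy
    exact mul_nonneg (ha0 y (Finset.mem_filter.1 hy).1) (le_of_lt (Finset.mem_filter.1 hy).2)
  rcases eq_or_lt_of_le hσ0 with hσz | hσpos
  · -- σ = 0 : all mass on Z
    have hPz : ∀ y ∈ P, a y = 0 := by
      intro y hy
      have h0 := (Finset.sum_eq_zero_iff_of_nonneg (fun y hy =>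
        mul_nonneg (ha0 y (Finset.mem_filter.1 hy).1)
          (le_of_lt (Finset.mem_filter.1 hy).2))).1 hσz.symm y hy
      have := (Finset.mem_filter.1 hy).2
      rcases mul_eq_zero.1 h0 with h | h
      · exact h
      · linarith
    have hNz : ∀ y ∈ N, a y = 0 := by
      have hsum0 : ∑ y ∈ N, a y * ℓ y = 0 := by rw [hbal2, ← hσz]; ring
      intro y hy
      have h0 := (Finset.sum_eq_zero_iff_of_nonpos (fun y hy =>
        mul_nonpos_of_nonneg_of_nonpos (ha0 y (Finset.mem_filter.1 hy).1)
          (le_of_lt (Finset.mem_filter.1 hy).2))).1 hsum0 y hy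
      have := (Finset.mem_filter.1 hy).2
      rcases mul_eq_zero.1 h0 with h | h
      · exact h
      · linarith
    have hxZ : x ∈ convexHull ℝ (Z : Set E) := by
      apply Finset.mem_convexHull'.2
      refine ⟨a, fun y hy => ha0 y (Finset.mem_filter.1 hy).1, ?_, ?_⟩
      · have := hsplit a
        rw [ha1] at this
        rw [Finset.sum_eq_zero hNz, Finset.sum_eq_zero hPz] at this
        linarith
      · have hNs : ∑ y ∈ N, a y • y = 0 :=
          Finset.sum_eq_zero (fun y hy => by rw [hNz y hy, zero_smul])
        have hPs : ∑ y ∈ P, a y • y = 0 :=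
          Finset.sum_eq_zero (fun y hy => by rw [hPz y hy, zero_smul])
        have := hsplitv (fun y => a y • y)
        rw [hax, hNs, hPs] at this
        simpa using this.symm
    apply convexHull_mono _ hxZ
    intro y hy
    simp only [sliceF, coe_union, Set.mem_union, mem_coe]
    exact Or.inl hy
  · -- σ > 0 : use crossings
    have hσne : σ ≠ 0 := ne_of_gt hσpos
    set μ : E ⊕ (E × E) → ℝ :=
      Sum.elim a (fun np => a np.1 * a np.2 * (ℓ np.2 - ℓ np.1) / σ) with hμ
    set zf : E ⊕ (E × E) → E := Sum.elim id (fun np => crossPt ℓ np.1 np.2) with hzf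
    set t : Finset (E ⊕ (E × E)) := Z.disjSum (N ×ˢ P) with ht
    have hd : ∀ np : E × E, np ∈ N ×ˢ P → (0:ℝ) < ℓ np.2 - ℓ np.1 := by
      intro np hnp
      rw [Finset.mem_product] at hnp
      have h1 := (Finset.mem_filter.1 hnp.1).2
      have h2 := (Finset.mem_filter.1 hnp.2).2
      linarith
    have hw0 : ∀ i ∈ t, 0 ≤ μ i := by
      intro i hi
      rcases i with y | np
      · simp only [hμ, Sum.elim_inl]
        rw [ht, Finset.inl_mem_disjSum] at hi
        exact ha0 y (Finset.mem_filter.1 hi).1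
      · simp only [hμ, Sum.elim_inr]
        rw [ht, Finset.inr_mem_disjSum] at hi
        have := hd np hi
        rw [Finset.mem_product] at hi
        exact div_nonneg (mul_nonneg (mul_nonneg
          (ha0 _ (Finset.mem_filter.1 hi.1).1) (ha0 _ (Finset.mem_filter.1 hi.2).1))
          (by linarith)) hσpos.le
    have keyw : ∑ np ∈ N ×ˢ P, a np.1 * a np.2 * (ℓ np.2 - ℓ np.1) / σ
        = ∑ y ∈ N, a y + ∑ y ∈ P, a y := by
      rw [Finset.sum_product]
      have inner : ∀ n ∈ N, ∑ p ∈ P, a n * a p * (ℓ p - ℓ n) / σ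
          = a n * (σ / σ) - (a n * ℓ n) * ((∑ p ∈ P, a p) / σ) := by
        intro n _
        calc ∑ p ∈ P, a n * a p * (ℓ p - ℓ n) / σ
            = ∑ p ∈ P, (a n * ((a p * ℓ p) / σ) - (a n * ℓ n) * (a p / σ)) :=
              Finset.sum_congr rfl (fun p _ => by ring)
          _ = a n * ((∑ p ∈ P, a p * ℓ p) / σ) - (a n * ℓ n) * ((∑ p ∈ P, a p) / σ) := by
              rw [Finset.sum_sub_distrib, ← Finset.mul_sum, ← Finset.mul_sum, ← Finset.sum_div,
                ← Finset.sum_div]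
          _ = a n * (σ / σ) - (a n * ℓ n) * ((∑ p ∈ P, a p) / σ) := by rw [← hσ]
      rw [Finset.sum_congr rfl inner, Finset.sum_sub_distrib, ← Finset.sum_mul, ← Finset.sum_mul,
        hbal2, div_self hσne, mul_one]
      field_simp
      ring
    have keyv : ∑ np ∈ N ×ˢ P, (a np.1 * a np.2 * (ℓ np.2 - ℓ np.1) / σ) • crossPt ℓ np.1 np.2
        = ∑ y ∈ N, a y • y + ∑ y ∈ P, a y • y := by
      have term : ∀ np ∈ N ×ˢ P, (a np.1 * a np.2 * (ℓ np.2 - ℓ np.1) / σ) • crossPt ℓ np.1 np.2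
          = ((a np.1 / σ) * (a np.2 * ℓ np.2)) • np.1
            + ((-(a np.1 * ℓ np.1) / σ) * a np.2) • np.2 := by
        intro np hnp
        have hdne : ℓ np.2 - ℓ np.1 ≠ 0 := ne_of_gt (hd np hnp)
        rw [crossPt, smul_add, smul_smul, smul_smul]
        congr 1
        · congr 1
          field_simp
        · congr 1
          field_simp
      rw [Finset.sum_congr rfl term, Finset.sum_add_distrib, Finset.sum_product,
        Finset.sum_product]
      congr 1
      · -- first part: sum over n of (sum over p of scalar) • n
        have : ∀ n ∈ N, ∑ p ∈ P, ((a n / σ) * (a p * ℓ p)) • n = a n • n := by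
          intro n _
          rw [← Finset.sum_smul, ← Finset.mul_sum, ← hσ]
          congr 1
          field_simp
        rw [Finset.sum_congr rfl this]
      · -- second part
        rw [Finset.sum_comm]
        have : ∀ p ∈ P, ∑ n ∈ N, ((-(a n * ℓ n) / σ) * a p) • p = a p • p := by
          intro p _
          rw [← Finset.sum_smul, ← Finset.sum_mul]
          congr 1
          have : ∑ n ∈ N, -(a n * ℓ n) / σ = (-(∑ n ∈ N, a n * ℓ n)) / σ := by
            rw [← Finset.sum_div, ← Finset.sum_neg_distrib]
          rw [this, hbal2]
          field_simp
        rw [Finset.sum_congr rfl this]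
    have hsum1 : ∑ i ∈ t, μ i = 1 := by
      rw [ht, hμ, Finset.sum_disjSum]
      simp only [Sum.elim_inl, Sum.elim_inr]
      rw [keyw, ← hsplit a, ha1]
    have hz : ∀ i ∈ t, zf i ∈ (sliceF ℓ S : Set E) := by
      intro i hi
      rcases i with y | np
      · rw [ht, Finset.inl_mem_disjSum] at hi
        simp only [hzf, Sum.elim_inl, id]
        simp only [sliceF, coe_union, Set.mem_union, mem_coe]
        exact Or.inl hi
      · rw [ht, Finset.inr_mem_disjSum] at hi
        simp only [hzf, Sum.elim_inr]
        simp only [sliceF, coe_union, Set.mem_union, mem_coe, Finset.mem_image]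
        refine Or.inr ⟨np, ?_, rfl⟩
        rw [Finset.mem_filter, Finset.mem_product]
        rw [Finset.mem_product] at hi
        exact ⟨⟨(Finset.mem_filter.1 hi.1).1, (Finset.mem_filter.1 hi.2).1⟩,
          (Finset.mem_filter.1 hi.1).2, (Finset.mem_filter.1 hi.2).2⟩
    have hcm := Finset.centerMass_mem_convexHull t hw0 (by rw [hsum1]; norm_num) hz
    have hcmx : t.centerMass μ zf = x := by
      rw [Finset.centerMass_eq_of_sum_1 t zf hsum1, ht, Finset.sum_disjSum]
      simp only [hμ, hzf, Sum.elim_inl, Sum.elim_inr, id]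
      rw [keyv, ← hax, hsplitv (fun y => a y • y)]
    rwa [hcmx] at hcm


-- planar machinery
def fib (F₂ : Finset (ℝ × ℝ)) (q : ℝ) : Set ℝ := {t | (q, t) ∈ convexHull ℝ (F₂ : Set (ℝ × ℝ))}

def JJ (F₂ : Finset (ℝ × ℝ)) : Set ℝ := {q | (fib F₂ q).Nonempty}

def hh (F₂ : Finset (ℝ × ℝ)) (q : ℝ) : ℝ := sSup (fib F₂ q)

lemma fib_isCompact (F₂ : Finset (ℝ × ℝ)) (q : ℝ) : IsCompact (fib F₂ q) := by
  have hK : IsCompact (convexHull ℝ (F₂ : Set (ℝ × ℝ))) := F₂.finite_toSet.isCompact_convexHull ℝ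
  have himg : IsCompact (Prod.snd '' convexHull ℝ (F₂ : Set (ℝ × ℝ))) :=
    hK.image continuous_snd
  apply himg.of_isClosed_subset
  · have : fib F₂ q = (fun t => ((q, t) : ℝ × ℝ)) ⁻¹' (convexHull ℝ (F₂ : Set (ℝ × ℝ))) := rfl
    rw [this]
    exact hK.isClosed.preimage (by fun_prop)
  · intro t ht
    exact ⟨(q, t), ht, rfl⟩

lemma hh_mem {F₂ : Finset (ℝ × ℝ)} {q : ℝ} (h : (fib F₂ q).Nonempty) : hh F₂ q ∈ fib F₂ q :=
  (fib_isCompact F₂ q).sSup_mem h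

lemma le_hh {F₂ : Finset (ℝ × ℝ)} {q t : ℝ} (ht : t ∈ fib F₂ q) : t ≤ hh F₂ q :=
  le_csSup (fib_isCompact F₂ q).bddAbove ht

lemma hh_concave (F₂ : Finset (ℝ × ℝ)) : ∀ q₁ ∈ JJ F₂, ∀ q₂ ∈ JJ F₂, ∀ a b : ℝ,
    0 ≤ a → 0 ≤ b → a + b = 1 →
    a * hh F₂ q₁ + b * hh F₂ q₂ ≤ hh F₂ (a * q₁ + b * q₂) := by
  intro q₁ h₁ q₂ h₂ a b ha hb hab
  have m₁ : ((q₁, hh F₂ q₁) : ℝ × ℝ) ∈ convexHull ℝ (F₂ : Set (ℝ × ℝ)) := hh_mem h₁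
  have m₂ : ((q₂, hh F₂ q₂) : ℝ × ℝ) ∈ convexHull ℝ (F₂ : Set (ℝ × ℝ)) := hh_mem h₂
  have hcc := (convex_convexHull ℝ (F₂ : Set (ℝ × ℝ))) m₁ m₂ ha hb hab
  have hmem : ((a * q₁ + b * q₂, a * hh F₂ q₁ + b * hh F₂ q₂) : ℝ × ℝ)
      ∈ convexHull ℝ (F₂ : Set (ℝ × ℝ)) := by
    convert hcc using 2 <;> simp [Prod.smul_def, smul_eq_mul]
  exact le_hh hmem

lemma pair_mem_fib {F₂ : Finset (ℝ × ℝ)} {p : ℝ × ℝ} (hp : p ∈ F₂) : p.2 ∈ fib F₂ p.1 := by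
  have : ((p.1, p.2) : ℝ × ℝ) ∈ convexHull ℝ (F₂ : Set (ℝ × ℝ)) := by
    rw [Prod.mk.eta]; exact subset_convexHull ℝ _ hp
  exact this

lemma mem_JJ_of_fst {F₂ : Finset (ℝ × ℝ)} {p : ℝ × ℝ} (hp : p ∈ F₂) : p.1 ∈ JJ F₂ :=
  ⟨p.2, pair_mem_fib hp⟩

lemma p2_le_hh {F₂ : Finset (ℝ × ℝ)} {p : ℝ × ℝ} (hp : p ∈ F₂) : p.2 ≤ hh F₂ p.1 :=
  le_hh (pair_mem_fib hp)

lemma JJ_subset_Icc {F₂ : Finset (ℝ × ℝ)} (hne : F₂.Nonempty) {q : ℝ} (hq : q ∈ JJ F₂) :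
    (F₂.image Prod.fst).min' (hne.image _) ≤ q ∧ q ≤ (F₂.image Prod.fst).max' (hne.image _) := by
  obtain ⟨t, ht⟩ := hq
  have hsub : convexHull ℝ (F₂ : Set (ℝ × ℝ)) ⊆
      {p : ℝ × ℝ | p.1 ∈ Set.Icc ((F₂.image Prod.fst).min' (hne.image _))
        ((F₂.image Prod.fst).max' (hne.image _))} := by
    apply convexHull_min
    · intro p hp
      constructor
      · exact Finset.min'_le _ _ (Finset.mem_image_of_mem _ hp)
      · exact Finset.le_max' _ _ (Finset.mem_image_of_mem _ hp)
    · have : IsLinearMap ℝ (Prod.fst : ℝ × ℝ → ℝ) := ⟨fun _ _ => rfl, fun _ _ => rfl⟩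
      exact (convex_Icc _ _).is_linear_preimage this
  exact hsub ht

-- chord slope and intercept through (x₁, hh x₁), (x₂, hh x₂)
def chS (F₂ : Finset (ℝ × ℝ)) (pr : ℝ × ℝ) : ℝ := (hh F₂ pr.2 - hh F₂ pr.1) / (pr.2 - pr.1)
def chI (F₂ : Finset (ℝ × ℝ)) (pr : ℝ × ℝ) : ℝ := hh F₂ pr.1 - chS F₂ pr * pr.1

lemma chord_le_between {F₂ : Finset (ℝ × ℝ)} {x₁ x₂ q : ℝ} (h₁ : x₁ ∈ JJ F₂) (h₂ : x₂ ∈ JJ F₂)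
    (hlt : x₁ < x₂) (hq₁ : x₁ ≤ q) (hq₂ : q ≤ x₂) :
    chS F₂ (x₁, x₂) * q + chI F₂ (x₁, x₂) ≤ hh F₂ q := by
  have hd : (0:ℝ) < x₂ - x₁ := by linarith
  have hcomb := hh_concave F₂ x₁ h₁ x₂ h₂ ((x₂ - q)/(x₂ - x₁)) ((q - x₁)/(x₂ - x₁))
    (div_nonneg (by linarith) hd.le) (div_nonneg (by linarith) hd.le)
    (by field_simp; ring)
  have hq : (x₂ - q)/(x₂ - x₁) * x₁ + (q - x₁)/(x₂ - x₁) * x₂ = q := by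
    field_simp; ring
  rw [hq] at hcomb
  have : chS F₂ (x₁, x₂) * q + chI F₂ (x₁, x₂)
      = (x₂ - q)/(x₂ - x₁) * hh F₂ x₁ + (q - x₁)/(x₂ - x₁) * hh F₂ x₂ := by
    simp only [chS, chI]
    field_simp
    ring
  linarith [this ▸ hcomb]

lemma chord_dominates {F₂ : Finset (ℝ × ℝ)} {x₁ x₂ x : ℝ} (h₁ : x₁ ∈ JJ F₂) (h₂ : x₂ ∈ JJ F₂)
    (hx : x ∈ JJ F₂) (hlt : x₁ < x₂) (hout : x ≤ x₁ ∨ x₂ ≤ x) :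
    hh F₂ x ≤ chS F₂ (x₁, x₂) * x + chI F₂ (x₁, x₂) := by
  have hd : (0:ℝ) < x₂ - x₁ := by linarith
  have hform : chS F₂ (x₁, x₂) * x + chI F₂ (x₁, x₂)
      = ((x₂ - x) * hh F₂ x₁ + (x - x₁) * hh F₂ x₂) / (x₂ - x₁) := by
    simp only [chS, chI]; field_simp; ring
  rcases hout with hout | hout
  · rcases eq_or_lt_of_le hout with rfl | hout
    · rw [hform, le_div_iff₀ hd]; ring_nf; exact le_rfl
    · -- x < x₁ : x₁ = a•x + b•x₂ with a = (x₂-x₁)/(x₂-x), b = (x₁-x)/(x₂-x)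
      have hdx : (0:ℝ) < x₂ - x := by linarith
      have hcomb := hh_concave F₂ x hx x₂ h₂ ((x₂ - x₁)/(x₂ - x)) ((x₁ - x)/(x₂ - x))
        (div_nonneg hd.le hdx.le) (div_nonneg (by linarith) hdx.le) (by field_simp; ring)
      have heq : (x₂ - x₁)/(x₂ - x) * x + (x₁ - x)/(x₂ - x) * x₂ = x₁ := by
        field_simp; ring
      rw [heq] at hcomb
      rw [hform, le_div_iff₀ hd]
      have hmul := mul_le_mul_of_nonneg_left hcomb hdx.le
      have e1 : (x₂ - x) * ((x₂ - x₁)/(x₂ - x) * hh F₂ x + (x₁ - x)/(x₂ - x) * hh F₂ x₂)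
          = (x₂ - x₁) * hh F₂ x + (x₁ - x) * hh F₂ x₂ := by
        field_simp
        try ring
      rw [e1] at hmul
      nlinarith [hmul]
  · rcases eq_or_lt_of_le hout with rfl | hout
    · rw [hform, le_div_iff₀ hd]; ring_nf; exact le_rfl
    · -- x₂ < x : x₂ = a•x₁ + b•x with a = (x-x₂)/(x-x₁), b = (x₂-x₁)/(x-x₁)
      have hdx : (0:ℝ) < x - x₁ := by linarith
      have hcomb := hh_concave F₂ x₁ h₁ x hx ((x - x₂)/(x - x₁)) ((x₂ - x₁)/(x - x₁))
        (div_nonneg (by linarith) hdx.le) (div_nonneg hd.le hdx.le) (by field_simp; ring)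
      have heq : (x - x₂)/(x - x₁) * x₁ + (x₂ - x₁)/(x - x₁) * x = x₂ := by
        field_simp; ring
      rw [heq] at hcomb
      rw [hform, le_div_iff₀ hd]
      have hmul := mul_le_mul_of_nonneg_left hcomb hdx.le
      have e1 : (x - x₁) * ((x - x₂)/(x - x₁) * hh F₂ x₁ + (x₂ - x₁)/(x - x₁) * hh F₂ x)
          = (x - x₂) * hh F₂ x₁ + (x₂ - x₁) * hh F₂ x := by
        field_simp
        try ring
      rw [e1] at hmul
      nlinarith [hmul]

lemma hull_le_line {F₂ : Finset (ℝ × ℝ)} {a b : ℝ} (hdom : ∀ p ∈ F₂, p.2 ≤ a * p.1 + b)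
    {q : ℝ} (hq : q ∈ JJ F₂) : hh F₂ q ≤ a * q + b := by
  have hmem : ((q, hh F₂ q) : ℝ × ℝ) ∈ convexHull ℝ (F₂ : Set (ℝ × ℝ)) := hh_mem hq
  have hlin : IsLinearMap ℝ (fun p : ℝ × ℝ => p.2 - a * p.1) := by
    constructor
    · intro p p'; simp [Prod.fst_add, Prod.snd_add]; ring
    · intro c p; simp [Prod.smul_def, smul_eq_mul]; ring
  have hsub : convexHull ℝ (F₂ : Set (ℝ × ℝ)) ⊆ {p : ℝ × ℝ | p.2 - a * p.1 ≤ b} :=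
    convexHull_min (fun p hp => by have := hdom p hp; simp only [Set.mem_setOf_eq]; linarith)
      (convex_halfSpace_le hlin b)
  have := hsub hmem
  simp only [Set.mem_setOf_eq] at this
  linarith

lemma planar_pl (F₂ : Finset (ℝ × ℝ)) (hne : F₂.Nonempty) :
    ∃ (F : Finset (ℝ × ℝ)) (hF : F.Nonempty),
      ∀ q ∈ JJ F₂, hh F₂ q = F.inf' hF (fun ab => ab.1 * q + ab.2) := by
  classical
  set X := F₂.image Prod.fst with hXdef
  have hX : X.Nonempty := hne.image _
  have hXJJ : ∀ x ∈ X, x ∈ JJ F₂ := by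
    intro x hx
    obtain ⟨p, hp, rfl⟩ := Finset.mem_image.1 hx
    exact mem_JJ_of_fst hp
  by_cases hdeg : ∀ x ∈ X, x = X.min' hX
  · refine ⟨{(0, hh F₂ (X.min' hX))}, Finset.singleton_nonempty _, ?_⟩
    intro q hq
    have hb := JJ_subset_Icc hne hq
    have hqmin : q = X.min' hX := by
      have hmax := hdeg _ (X.max'_mem hX)
      have h1 : X.min' hX ≤ q := hb.1
      have h2 : q ≤ X.max' hX := hb.2
      rw [hmax] at h2
      linarith
    rw [Finset.inf'_singleton, hqmin]
    ring
  · push_neg at hdeg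
    obtain ⟨x', hx'X, hx'ne⟩ := hdeg
    have hminlt : ∀ q ∈ JJ F₂, X.min' hX ≤ q := fun q hq => (JJ_subset_Icc hne hq).1
    -- the finite family of dominating chords
    set F : Finset (ℝ × ℝ) := ((X ×ˢ X).filter (fun pr =>
        pr.1 < pr.2 ∧ ∀ p ∈ F₂, p.2 ≤ chS F₂ pr * p.1 + chI F₂ pr)).image
        (fun pr => (chS F₂ pr, chI F₂ pr)) with hFdef
    have exists_pair : ∀ q ∈ JJ F₂, ∃ pr : ℝ × ℝ, pr ∈ X ×ˢ X ∧ pr.1 < pr.2 ∧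
        pr.1 ≤ q ∧ q ≤ pr.2 ∧ ∀ x ∈ X, x ≤ pr.1 ∨ pr.2 ≤ x := by
      intro q hq
      have hicc := JJ_subset_Icc hne hq
      have hXle : (X.filter (fun x => x ≤ q)).Nonempty :=
        ⟨X.min' hX, Finset.mem_filter.2 ⟨X.min'_mem hX, hicc.1⟩⟩
      set m := (X.filter (fun x => x ≤ q)).max' hXle with hm
      have hmprop := Finset.mem_filter.1 ((X.filter (fun x => x ≤ q)).max'_mem hXle)
      by_cases hgt : (X.filter (fun x => q < x)).Nonempty
      · set x₂ := (X.filter (fun x => q < x)).min' hgt with hx₂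
        have hx₂prop := Finset.mem_filter.1 ((X.filter (fun x => q < x)).min'_mem hgt)
        refine ⟨(m, x₂), Finset.mem_product.2 ⟨hmprop.1, hx₂prop.1⟩, ?_, hmprop.2,
          hx₂prop.2.le, ?_⟩
        · exact lt_of_le_of_lt hmprop.2 hx₂prop.2
        · intro x hx
          by_cases hxq : x ≤ q
          · exact Or.inl (Finset.le_max' (X.filter (fun y => y ≤ q)) x
              (Finset.mem_filter.2 ⟨hx, hxq⟩))
          · exact Or.inr (Finset.min'_le (X.filter (fun y => q < y)) x
              (Finset.mem_filter.2 ⟨hx, not_le.1 hxq⟩))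
      · have hall : ∀ x ∈ X, x ≤ q := by
          intro x hx
          by_contra hc
          exact hgt ⟨x, Finset.mem_filter.2 ⟨hx, not_le.1 hc⟩⟩
        have hqmax : q = X.max' hX := le_antisymm hicc.2 (hall _ (X.max'_mem hX))
        have hqX : q ∈ X := hqmax ▸ X.max'_mem hX
        have hminltq : X.min' hX < q := by
          rcases lt_or_eq_of_le (hicc.1) with h | h
          · exact h
          · exact absurd (le_antisymm (by linarith [hall _ hx'X]) (X.min'_le _ hx'X)) hx'ne
        have hne2 : (X.filter (fun x => x < q)).Nonempty :=
          ⟨X.min' hX, Finset.mem_filter.2 ⟨X.min'_mem hX, hminltq⟩⟩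
        set x₁ := (X.filter (fun x => x < q)).max' hne2 with hx₁
        have hx₁prop := Finset.mem_filter.1 ((X.filter (fun x => x < q)).max'_mem hne2)
        refine ⟨(x₁, q), Finset.mem_product.2 ⟨hx₁prop.1, hqX⟩, hx₁prop.2, hx₁prop.2.le,
          le_refl q, ?_⟩
        intro x hx
        by_cases hxq : x < q
        · exact Or.inl (Finset.le_max' (X.filter (fun y => y < q)) x
            (Finset.mem_filter.2 ⟨hx, hxq⟩))
        · exact Or.inr (not_lt.1 hxq)
    have pair_mem_F : ∀ pr : ℝ × ℝ, pr ∈ X ×ˢ X → pr.1 < pr.2 →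
        (∀ x ∈ X, x ≤ pr.1 ∨ pr.2 ≤ x) → (chS F₂ pr, chI F₂ pr) ∈ F := by
      intro pr hprX hlt hsep
      rw [hFdef]
      apply Finset.mem_image_of_mem
      rw [Finset.mem_filter]
      refine ⟨hprX, hlt, ?_⟩
      intro p hp
      have hp1X : p.1 ∈ X := Finset.mem_image_of_mem _ hp
      have h1 := p2_le_hh hp
      have hpr := Finset.mem_product.1 hprX
      have h2 : hh F₂ p.1 ≤ chS F₂ pr * p.1 + chI F₂ pr := by
        have := chord_dominates (hXJJ _ hpr.1) (hXJJ _ hpr.2) (hXJJ _ hp1X) hlt (hsep _ hp1X)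
        simpa using this
      linarith
    have hFne : F.Nonempty := by
      obtain ⟨pr, h1, h2, _, _, h5⟩ := exists_pair (X.min' hX) (hXJJ _ (X.min'_mem hX))
      exact ⟨_, pair_mem_F pr h1 h2 h5⟩
    refine ⟨F, hFne, ?_⟩
    intro q hq
    apply le_antisymm
    · apply Finset.le_inf'
      intro ab hab
      rw [hFdef] at hab
      obtain ⟨pr, hpr, rfl⟩ := Finset.mem_image.1 hab
      rw [Finset.mem_filter] at hpr
      exact hull_le_line hpr.2.2 hq
    · obtain ⟨pr, h1, h2, h3, h4, h5⟩ := exists_pair q hq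
      apply Finset.inf'_le_of_le _ (pair_mem_F pr h1 h2 h5)
      have hpr := Finset.mem_product.1 h1
      have := chord_le_between (hXJJ _ hpr.1) (hXJJ _ hpr.2) h2 h3 h4
      simpa using this



abbrev M4 : Type := (ℝ × ℝ) × (ℝ × ℝ) × (ℝ × ℝ) × (ℝ × ℝ)
abbrev E5 : Type := ℝ × ℝ × ℝ × ℝ × ℝ

def Phi (s₁ s₂ u₁ u₂ : ℝ) : M4 →ₗ[ℝ] E5 where
  toFun z := ((z.2.1.1 - z.1.1) - (z.2.2.2.1 - z.2.2.1.1),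
    (z.2.1.2 - z.1.2) - (z.2.2.2.2 - z.2.2.1.2),
    (z.2.1.1 - z.1.1) * s₂ - (z.2.1.2 - z.1.2) * s₁,
    ((z.2.1.1 - z.1.1) * s₁ + (z.2.1.2 - z.1.2) * s₂) / (s₁ ^ 2 + s₂ ^ 2),
    (z.1.1 * u₁ + z.1.2 * u₂) - (z.2.2.1.1 * u₁ + z.2.2.1.2 * u₂))
  map_add' x y := by
    simp only [Prod.fst_add, Prod.snd_add, Prod.mk_add_mk, Prod.mk.injEq]
    refine ⟨by ring, by ring, by ring, by ring, by ring⟩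
  map_smul' c x := by
    simp only [Prod.smul_fst, Prod.smul_snd, smul_eq_mul, RingHom.id_apply, Prod.smul_mk,
      Prod.mk.injEq]
    refine ⟨by ring, by ring, by ring, by ring, by ring⟩

def l1 : E5 →ₗ[ℝ] ℝ := LinearMap.fst ℝ ℝ _
def l2 : E5 →ₗ[ℝ] ℝ := (LinearMap.fst ℝ ℝ _).comp (LinearMap.snd ℝ ℝ _)
def l3 : E5 →ₗ[ℝ] ℝ :=
  ((LinearMap.fst ℝ ℝ _).comp (LinearMap.snd ℝ ℝ _)).comp (LinearMap.snd ℝ ℝ _)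
def p45 : E5 →ₗ[ℝ] ℝ × ℝ :=
  ((LinearMap.snd ℝ ℝ _).comp (LinearMap.snd ℝ ℝ _)).comp (LinearMap.snd ℝ ℝ _)

example : l1 ((1:ℝ),(2:ℝ),(3:ℝ),(4:ℝ),(5:ℝ)) = 1 := rfl
example : l2 ((1:ℝ),(2:ℝ),(3:ℝ),(4:ℝ),(5:ℝ)) = 2 := rfl
example : l3 ((1:ℝ),(2:ℝ),(3:ℝ),(4:ℝ),(5:ℝ)) = 3 := rfl
example : p45 ((1:ℝ),(2:ℝ),(3:ℝ),(4:ℝ),(5:ℝ)) = (4,5) := rfl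

set_option maxHeartbeats 1000000 in
theorem exists_F2 (V : Finset (ℝ × ℝ)) (w : ℤ × ℤ) (hw : w ≠ 0) (u : ℤ × ℤ) :
    ∃ F₂ : Finset (ℝ × ℝ), ∀ q t : ℝ,
      ((q, t) ∈ convexHull ℝ (F₂ : Set (ℝ × ℝ))) ↔
      (∃ x x' : ℝ × ℝ,
        (x ∈ convexHull ℝ (V : Set (ℝ × ℝ)) ∧
          x + q • toR w ∈ convexHull ℝ (V : Set (ℝ × ℝ))) ∧
        (x' ∈ convexHull ℝ (V : Set (ℝ × ℝ)) ∧
          x' + q • toR w ∈ convexHull ℝ (V : Set (ℝ × ℝ))) ∧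
        pairR x u - pairR x' u = t) := by
  classical
  set s : ℝ × ℝ := toR w with hs
  have hs2 : 0 < s.1 ^ 2 + s.2 ^ 2 := by
    have hne : s.1 ≠ 0 ∨ s.2 ≠ 0 := by
      by_contra hc
      push_neg at hc
      apply hw
      have h1 : (w.1 : ℝ) = 0 := hc.1
      have h2 : (w.2 : ℝ) = 0 := hc.2
      have : w.1 = 0 := by exact_mod_cast h1
      have : w.2 = 0 := by exact_mod_cast h2
      exact Prod.ext ‹w.1 = 0› ‹w.2 = 0›
    rcases hne with h | h
    · have := pow_two_pos_of_ne_zero h  -- 0 < s.1^2  (naming?)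
      nlinarith [sq_nonneg s.2]
    · have := pow_two_pos_of_ne_zero h
      nlinarith [sq_nonneg s.1]
  set Φ : M4 →ₗ[ℝ] E5 := Phi s.1 s.2 (u.1 : ℝ) (u.2 : ℝ) with hΦ
  set VM : Finset M4 := V ×ˢ (V ×ˢ (V ×ˢ V)) with hVM
  set W : Finset E5 := VM.image Φ with hW
  set T₃ : Finset E5 := sliceF l3 (sliceF l2 (sliceF l1 W)) with hT₃
  set F₂ : Finset (ℝ × ℝ) := T₃.image p45 with hF₂
  set Dh : Set (ℝ × ℝ) := convexHull ℝ (V : Set (ℝ × ℝ)) with hDh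
  have hDW : convexHull ℝ (W : Set E5) = Φ '' (Dh ×ˢ (Dh ×ˢ (Dh ×ˢ Dh))) := by
    rw [hW, Finset.coe_image, ← LinearMap.image_convexHull]
    congr 1
    rw [hVM, Finset.coe_product, Finset.coe_product, Finset.coe_product,
      convexHull_prod, convexHull_prod, convexHull_prod]
  -- inclusion chains
  have hsub1 : convexHull ℝ ((sliceF l1 W : Finset E5) : Set E5) ⊆ convexHull ℝ (W : Set E5) :=
    convexHull_min (sliceF_subset_convexHull _ _) (convex_convexHull _ _)
  have hsub2 : convexHull ℝ ((sliceF l2 (sliceF l1 W) : Finset E5) : Set E5)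
      ⊆ convexHull ℝ ((sliceF l1 W : Finset E5) : Set E5) :=
    convexHull_min (sliceF_subset_convexHull _ _) (convex_convexHull _ _)
  have hsub3 : convexHull ℝ (T₃ : Set E5)
      ⊆ convexHull ℝ ((sliceF l2 (sliceF l1 W) : Finset E5) : Set E5) :=
    convexHull_min (sliceF_subset_convexHull _ _) (convex_convexHull _ _)
  have hplane : ∀ (l : E5 →ₗ[ℝ] ℝ) (S : Finset E5), (∀ x ∈ S, l x = 0) →
      ∀ p ∈ convexHull ℝ (S : Set E5), l p = 0 := by
    intro l S h p hp
    have : convexHull ℝ (S : Set E5) ⊆ {y | l y = 0} :=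
      convexHull_min (fun y hy => h y hy) (convex_hyperplane l.isLinear 0)
    exact this hp
  have hvanish : ∀ p ∈ convexHull ℝ (T₃ : Set E5), l1 p = 0 ∧ l2 p = 0 ∧ l3 p = 0 := by
    intro p hp
    refine ⟨?_, ?_, ?_⟩
    · exact hplane l1 _ (fun x hx => sliceF_vanish l1 W hx) p (hsub2 (hsub3 hp))
    · exact hplane l2 _ (fun x hx => sliceF_vanish l2 _ hx) p (hsub3 hp)
    · exact hplane l3 _ (fun x hx => sliceF_vanish l3 _ hx) p hp
  -- characterization of the fiber
  have hfibW : ∀ q t : ℝ, ((q, t) ∈ convexHull ℝ (F₂ : Set (ℝ × ℝ))) ↔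
      (((0, 0, 0, q, t) : E5) ∈ convexHull ℝ (W : Set E5)) := by
    intro q t
    constructor
    · intro h
      rw [hF₂, Finset.coe_image, ← LinearMap.image_convexHull] at h
      obtain ⟨p, hpT₃, hp45⟩ := h
      obtain ⟨a, b, c, de⟩ := p
      obtain ⟨hl1, hl2, hl3⟩ := hvanish _ hpT₃
      have ha : a = 0 := hl1
      have hb : b = 0 := hl2
      have hc : c = 0 := hl3
      have hde : de = (q, t) := hp45
      rw [ha, hb, hc, hde] at hpT₃
      exact hsub1 (hsub2 (hsub3 hpT₃))
    · intro h
      have h1 : ((0, 0, 0, q, t) : E5) ∈ convexHull ℝ ((sliceF l1 W : Finset E5) : Set E5) :=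
        sliceF_main l1 W h rfl
      have h2 : ((0, 0, 0, q, t) : E5)
          ∈ convexHull ℝ ((sliceF l2 (sliceF l1 W) : Finset E5) : Set E5) :=
        sliceF_main l2 _ h1 rfl
      have h3 : ((0, 0, 0, q, t) : E5) ∈ convexHull ℝ (T₃ : Set E5) :=
        sliceF_main l3 _ h2 rfl
      have : p45 ((0, 0, 0, q, t) : E5) ∈ p45 '' (convexHull ℝ (T₃ : Set E5)) :=
        Set.mem_image_of_mem _ h3
      rw [LinearMap.image_convexHull] at this
      rw [hF₂, Finset.coe_image]
      exact this
  refine ⟨F₂, ?_⟩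
  intro q t
  rw [hfibW, hDW]
  constructor
  · rintro ⟨⟨x, y, x', y'⟩, hzmem, hzeq⟩
    simp only [Set.mem_prod] at hzmem
    obtain ⟨hx, hy, hx', hy'⟩ := hzmem
    have he : ((y.1 - x.1) - (y'.1 - x'.1), (y.2 - x.2) - (y'.2 - x'.2),
        (y.1 - x.1) * s.2 - (y.2 - x.2) * s.1,
        ((y.1 - x.1) * s.1 + (y.2 - x.2) * s.2) / (s.1 ^ 2 + s.2 ^ 2),
        (x.1 * (u.1 : ℝ) + x.2 * (u.2 : ℝ)) - (x'.1 * (u.1 : ℝ) + x'.2 * (u.2 : ℝ)))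
        = ((0 : ℝ), (0 : ℝ), (0 : ℝ), q, t) := hzeq
    rw [Prod.mk.injEq, Prod.mk.injEq, Prod.mk.injEq, Prod.mk.injEq] at he
    obtain ⟨e1, e2, e3, e4, e5⟩ := he
    have hs2ne : s.1 ^ 2 + s.2 ^ 2 ≠ 0 := ne_of_gt hs2
    have e4' : (y.1 - x.1) * s.1 + (y.2 - x.2) * s.2 = q * (s.1 ^ 2 + s.2 ^ 2) :=
      (div_eq_iff hs2ne).1 e4
    have hv1 : y.1 - x.1 = q * s.1 := by
      have h := mul_left_cancel₀ hs2ne (a := s.1 ^ 2 + s.2 ^ 2)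
        (b := y.1 - x.1) (c := q * s.1) ?_
      · exact h
      · linear_combination s.1 * e4' + s.2 * e3
    have hv2 : y.2 - x.2 = q * s.2 := by
      have h := mul_left_cancel₀ hs2ne (a := s.1 ^ 2 + s.2 ^ 2)
        (b := y.2 - x.2) (c := q * s.2) ?_
      · exact h
      · linear_combination s.2 * e4' - s.1 * e3
    have hqs : (q • s : ℝ × ℝ) = (q * s.1, q * s.2) := rfl
    have hxy : x + q • s = y := by
      rw [hqs]
      ext
      · simp only [Prod.fst_add]; linarith
      · simp only [Prod.snd_add]; linarith
    have hxy' : x' + q • s = y' := by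
      rw [hqs]
      ext
      · simp only [Prod.fst_add]; linarith
      · simp only [Prod.snd_add]; linarith
    refine ⟨x, x', ⟨hx, by rw [hxy]; exact hy⟩, ⟨hx', by rw [hxy']; exact hy'⟩, ?_⟩
    rw [← e5]; rfl
  · rintro ⟨x, x', ⟨hx, hxq⟩, ⟨hx', hxq'⟩, ht⟩
    refine ⟨(x, x + q • s, x', x' + q • s), ?_, ?_⟩
    · simp only [Set.mem_prod]
      exact ⟨hx, hxq, hx', hxq'⟩
    · have hqs1 : ((q • s : ℝ × ℝ)).1 = q * s.1 := rfl
      have hqs2 : ((q • s : ℝ × ℝ)).2 = q * s.2 := rfl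
      show ((x + q • s).1 - x.1 - ((x' + q • s).1 - x'.1),
        (x + q • s).2 - x.2 - ((x' + q • s).2 - x'.2),
        ((x + q • s).1 - x.1) * s.2 - ((x + q • s).2 - x.2) * s.1,
        (((x + q • s).1 - x.1) * s.1 + ((x + q • s).2 - x.2) * s.2) / (s.1 ^ 2 + s.2 ^ 2),
        (x.1 * (u.1 : ℝ) + x.2 * (u.2 : ℝ)) - (x'.1 * (u.1 : ℝ) + x'.2 * (u.2 : ℝ)))
        = ((0 : ℝ), (0 : ℝ), (0 : ℝ), q, t)
      have h1 : (x + q • s).1 - x.1 = q * s.1 := by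
        simp only [Prod.fst_add, hqs1]; ring
      have h2 : (x + q • s).2 - x.2 = q * s.2 := by
        simp only [Prod.snd_add, hqs2]; ring
      have h1' : (x' + q • s).1 - x'.1 = q * s.1 := by
        simp only [Prod.fst_add, hqs1]; ring
      have h2' : (x' + q • s).2 - x'.2 = q * s.2 := by
        simp only [Prod.snd_add, hqs2]; ring
      rw [h1, h2, h1', h2']
      have hs2ne : s.1 ^ 2 + s.2 ^ 2 ≠ 0 := ne_of_gt hs2
      rw [Prod.mk.injEq, Prod.mk.injEq, Prod.mk.injEq, Prod.mk.injEq]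
      refine ⟨by ring, by ring, by ring, by field_simp, ?_⟩
      rw [← ht]; rfl

/- STATEMENT 15: For a polytope `Δ_D ⊆ ℝ²`, a lattice segment `Δ_v = conv(0,w)`
and a nonzero functional `u`, the function `q ↦ d(q) = wid_u((Δ_D : qΔ_v))` is
concave and piecewise linear (the minimum of finitely many affine functions) on
the set `I` of `q ≥ 0` where the quotient is nonempty, and there is `q̂ ≥ 0`
with `(Δ_D : qΔ_v) = ∅` (i.e. `d(q) = −∞`) for all `q > q̂`. -/
set_option maxHeartbeats 1000000 in
theorem stmt15 (V : Finset (ℝ × ℝ)) (hV : V.Nonempty) (w : ℤ × ℤ) (hw : w ≠ 0)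
    (u : ℤ × ℤ) (hu : u ≠ 0)
    (D : Set (ℝ × ℝ)) (hD : D = convexHull ℝ (V : Set (ℝ × ℝ)))
    (I : Set ℝ) (hI : I = {q : ℝ | 0 ≤ q ∧ (quotP D (convexHull ℝ {(0 : ℝ × ℝ), q • toR w})).Nonempty})
    (d : ℝ → ℝ) (hd : ∀ q, d q = wid u (quotP D (convexHull ℝ {(0 : ℝ × ℝ), q • toR w}))) :
    ConcaveOn ℝ I d ∧
    (∃ F : Finset (ℝ × ℝ), ∃ hF : F.Nonempty,
      ∀ q ∈ I, d q = F.inf' hF (fun ab => ab.1 * q + ab.2)) ∧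
    (∃ qhat : ℝ, 0 ≤ qhat ∧ ∀ q > qhat,
      quotP D (convexHull ℝ {(0 : ℝ × ℝ), q • toR w}) = ∅) := by
  classical
  obtain ⟨F₂, hfib⟩ := exists_F2 V w hw u
  rw [← hD] at hfib
  have hDconv : Convex ℝ D := hD ▸ convex_convexHull ℝ _
  -- description of the quotient set
  have quot_eq : ∀ q : ℝ, quotP D (convexHull ℝ {(0 : ℝ × ℝ), q • toR w})
      = {x : ℝ × ℝ | x ∈ D ∧ x + q • toR w ∈ D} := by
    intro q
    ext x
    rw [convexHull_pair]
    constructor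
    · intro hx
      refine ⟨?_, ?_⟩
      · have := hx 0 (left_mem_segment ℝ _ _)
        rwa [add_zero] at this
      · exact hx _ (right_mem_segment ℝ _ _)
    · rintro ⟨h1, h2⟩ z hz
      obtain ⟨a, b, ha, hb, hab, rfl⟩ := hz
      have heq : x + (a • (0 : ℝ × ℝ) + b • (q • toR w))
          = a • x + b • (x + q • toR w) := by
        rw [smul_zero, zero_add, smul_add, ← add_assoc]
        congr 1
        rw [← add_smul, hab, one_smul]
      rw [heq]
      exact hDconv h1 h2 ha hb hab
  -- membership in the fiber
  have hfib' : ∀ q t : ℝ, t ∈ fib F₂ q ↔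
      (∃ x x' : ℝ × ℝ, x ∈ quotP D (convexHull ℝ {(0 : ℝ × ℝ), q • toR w}) ∧
        x' ∈ quotP D (convexHull ℝ {(0 : ℝ × ℝ), q • toR w}) ∧
        pairR x u - pairR x' u = t) := by
    intro q t
    have h0 : t ∈ fib F₂ q ↔ ((q, t) ∈ convexHull ℝ (F₂ : Set (ℝ × ℝ))) := Iff.rfl
    rw [h0, hfib]
    constructor
    · rintro ⟨x, x', hx, hx', ht⟩
      refine ⟨x, x', ?_, ?_, ht⟩
      · rw [quot_eq]; exact hx
      · rw [quot_eq]; exact hx'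
    · rintro ⟨x, x', hx, hx', ht⟩
      rw [quot_eq] at hx hx'
      exact ⟨x, x', hx, hx', ht⟩
  have hIJJ : ∀ q ∈ I, q ∈ JJ F₂ := by
    intro q hq
    rw [hI] at hq
    obtain ⟨hq0, x, hx⟩ := hq
    exact ⟨0, (hfib' q 0).2 ⟨x, x, hx, hx, sub_self _⟩⟩
  -- symmetry of the fiber
  have hsymm : ∀ q t : ℝ, t ∈ fib F₂ q → -t ∈ fib F₂ q := by
    intro q t ht
    obtain ⟨x, x', h1, h2, h3⟩ := (hfib' q t).1 ht
    exact (hfib' q (-t)).2 ⟨x', x, h2, h1, by linarith⟩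
  -- d agrees with hh on I
  have hwid : ∀ q ∈ I, d q = hh F₂ q := by
    intro q hq
    have hqJJ := hIJJ q hq
    have hne : (fib F₂ q).Nonempty := hqJJ
    have hbdd : BddAbove (fib F₂ q) := (fib_isCompact F₂ q).bddAbove
    have himg : (fun pq : (ℝ × ℝ) × (ℝ × ℝ) => |pairR (pq.1 - pq.2) u|) ''
        ((quotP D (convexHull ℝ {(0 : ℝ × ℝ), q • toR w})) ×ˢ
          (quotP D (convexHull ℝ {(0 : ℝ × ℝ), q • toR w})))
        = abs '' (fib F₂ q) := by
      ext r
      constructor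
      · rintro ⟨⟨p, p'⟩, hmem, rfl⟩
        rw [Set.mem_prod] at hmem
        have hpair : pairR (p - p') u = pairR p u - pairR p' u := by
          simp only [pairR, Prod.fst_sub, Prod.snd_sub]
          ring
        refine ⟨pairR p u - pairR p' u, (hfib' q _).2 ⟨p, p', hmem.1, hmem.2, rfl⟩, ?_⟩
        show |pairR p u - pairR p' u| = |pairR ((p, p').1 - (p, p').2) u|
        rw [hpair]
      · rintro ⟨t, ht, rfl⟩
        obtain ⟨x, x', h1, h2, h3⟩ := (hfib' q t).1 ht
        refine ⟨(x, x'), Set.mem_prod.2 ⟨h1, h2⟩, ?_⟩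
        have hpair : pairR (x - x') u = pairR x u - pairR x' u := by
          simp only [pairR, Prod.fst_sub, Prod.snd_sub]
          ring
        show |pairR ((x, x').1 - (x, x').2) u| = |t|
        rw [hpair, h3]
    have hbddabs : BddAbove (abs '' (fib F₂ q)) := by
      obtain ⟨B, hB⟩ := hbdd
      refine ⟨B, ?_⟩
      rintro r ⟨t, ht, rfl⟩
      rcases abs_cases t with ⟨he, _⟩ | ⟨he, _⟩
      · rw [he]; exact hB ht
      · rw [he]; exact hB (hsymm q t ht)
    have habs : sSup (abs '' (fib F₂ q)) = sSup (fib F₂ q) := by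
      apply le_antisymm
      · apply csSup_le (hne.image _)
        rintro r ⟨t, ht, rfl⟩
        rcases abs_cases t with ⟨he, _⟩ | ⟨he, _⟩
        · rw [he]; exact le_csSup hbdd ht
        · rw [he]; exact le_csSup hbdd (hsymm q t ht)
      · apply csSup_le hne
        intro t ht
        exact (le_abs_self t).trans (le_csSup hbddabs ⟨t, ht, rfl⟩)
    rw [hd q, wid, himg, habs]
    rfl
  -- convexity of I
  have hIconv : Convex ℝ I := by
    intro q₁ hq₁ q₂ hq₂ a b ha hb hab
    rw [hI] at hq₁ hq₂ ⊢
    obtain ⟨h10, x₁, hx₁⟩ := hq₁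
    obtain ⟨h20, x₂, hx₂⟩ := hq₂
    rw [quot_eq] at hx₁ hx₂
    constructor
    · simp only [smul_eq_mul]
      exact add_nonneg (mul_nonneg ha h10) (mul_nonneg hb h20)
    · refine ⟨a • x₁ + b • x₂, ?_⟩
      rw [quot_eq]
      refine ⟨hDconv hx₁.1 hx₂.1 ha hb hab, ?_⟩
      have heq : a • x₁ + b • x₂ + (a • q₁ + b • q₂) • toR w
          = a • (x₁ + q₁ • toR w) + b • (x₂ + q₂ • toR w) := by
        simp only [smul_eq_mul, smul_add, add_smul, mul_smul]
        abel
      rw [heq]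
      exact hDconv hx₁.2 hx₂.2 ha hb hab
  have hF₂ne : F₂.Nonempty := by
    have h0I : (0 : ℝ) ∈ I := by
      rw [hI]
      obtain ⟨v₀, hv₀⟩ := hV
      refine ⟨le_refl 0, v₀, ?_⟩
      rw [quot_eq]
      constructor
      · rw [hD]; exact subset_convexHull ℝ _ hv₀
      · rw [zero_smul, add_zero, hD]; exact subset_convexHull ℝ _ hv₀
    have h0JJ := hIJJ 0 h0I
    rcases F₂.eq_empty_or_nonempty with rfl | h
    · exfalso
      obtain ⟨t, ht⟩ := h0JJ
      have : ((0 : ℝ), t) ∈ convexHull ℝ ((∅ : Finset (ℝ × ℝ)) : Set (ℝ × ℝ)) := ht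
      rw [Finset.coe_empty, convexHull_empty] at this
      exact this
    · exact h
  refine ⟨?_, ?_, ?_⟩
  · -- concavity
    refine ⟨hIconv, ?_⟩
    intro q₁ h₁ q₂ h₂ a b ha hb hab
    have hcomb : a • q₁ + b • q₂ ∈ I := hIconv h₁ h₂ ha hb hab
    rw [hwid _ h₁, hwid _ h₂, hwid _ hcomb]
    simp only [smul_eq_mul]
    exact hh_concave F₂ q₁ (hIJJ _ h₁) q₂ (hIJJ _ h₂) a b ha hb hab
  · -- piecewise linear
    obtain ⟨F, hF, hform⟩ := planar_pl F₂ hF₂ne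
    refine ⟨F, hF, ?_⟩
    intro q hq
    rw [hwid q hq]
    exact hform q (hIJJ q hq)
  · -- eventual emptiness
    refine ⟨max ((F₂.image Prod.fst).max' (hF₂ne.image _)) 0, le_max_right _ _, ?_⟩
    intro q hq
    by_contra hne'
    obtain ⟨x, hx⟩ := Set.nonempty_iff_ne_empty.2 hne'
    have hqJJ : q ∈ JJ F₂ := ⟨0, (hfib' q 0).2 ⟨x, x, hx, hx, sub_self _⟩⟩
    have := (JJ_subset_Icc hF₂ne hqJJ).2
    have hq' : q > max ((F₂.image Prod.fst).max' (hF₂ne.image _)) 0 := hq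
    have := le_max_left ((F₂.image Prod.fst).max' (hF₂ne.image _)) (0:ℝ)
    linarith [(JJ_subset_Icc hF₂ne hqJJ).2]
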